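/- Let 0 < ε < 1 be a constant and set c = 3⌈log_{7/8}(ε/2)⌉. There exists a polynomial p such that for all sufficiently large n the following holds: if T is a 3CNF formula over the variables X = {x_1,…,x_n} consisting of c/3 pairwise variable-disjoint clauses (no variable occurs in two clauses of T), then there exists a CNF formula A over X together with finitely many extension variables such that A discards at most ε·2^n assignments to X and T ∪ A has a resolution refutation of size at most p(n). -/

import Mathlib

open scoped Classical

/-- Propositional variables are natural numbers. -/
abbrev Var := ℕ

/-- A literal: a variable with a polarity (`true` = positive occurrence). -/
abbrev Lit := Var × Bool

/-- A clause: a finite set of literals. -/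
abbrev Clause := Finset Lit

/-- A CNF formula: a finite collection of clauses. -/
abbrev CNF := Finset Clause

/-- A truth assignment to all variables. -/
abbrev Assignment := Var → Bool

/-- A clause is proper if it contains no variable together with its negation. -/
def Clause.Proper (C : Clause) : Prop := ∀ v : Var, ¬((v, true) ∈ C ∧ (v, false) ∈ C)

/-- The set of variables occurring in a clause. -/
def Clause.vars (C : Clause) : Finset Var := C.image Prod.fst

/-- The set of variables occurring in a CNF formula. -/
def CNF.vars (K : CNF) : Finset Var := K.sup Clause.vars

/-- Every clause of the CNF is a proper clause. -/
def CNF.Proper (K : CNF) : Prop := ∀ C ∈ K, Clause.Proper C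

/-- Evaluation of a literal under an assignment. -/
def Lit.eval (a : Assignment) (l : Lit) : Bool := if l.2 then a l.1 else !(a l.1)

/-- An assignment satisfies a clause if it makes some literal of it true. -/
def Clause.Sat (a : Assignment) (C : Clause) : Prop := ∃ l ∈ C, Lit.eval a l = true

/-- An assignment satisfies a CNF if it satisfies every clause. -/
def CNF.Sat (a : Assignment) (K : CNF) : Prop := ∀ C ∈ K, Clause.Sat a C

/-- A CNF formula is unsatisfiable. -/
def CNF.Unsat (K : CNF) : Prop := ¬∃ a : Assignment, CNF.Sat a K

/-- A 3CNF: every clause has exactly 3 literals over 3 distinct variables. -/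
def Is3CNF (K : CNF) : Prop := ∀ C ∈ K, C.card = 3 ∧ (Clause.vars C).card = 3

/-- One admissible step in a resolution derivation from the CNF `K`, given the
list `prev` of earlier clauses: `D` is a clause of `K`, or is obtained by
weakening from an earlier clause, or is the resolvent `C ∨ C'` of two earlier
clauses `C ∨ x` and `C' ∨ ¬x` where the variable `x` occurs in neither `C`
nor `C'`. -/
def ResStep (K : CNF) (prev : List Clause) (D : Clause) : Prop :=
  D ∈ K ∨ (∃ E ∈ prev, E ⊆ D) ∨
    (∃ C₁ ∈ prev, ∃ C₂ ∈ prev, ∃ x : Var,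
      (x, true) ∈ C₁ ∧ (x, false) ∈ C₂ ∧
      D = C₁.erase (x, true) ∪ C₂.erase (x, false) ∧
      (x, true) ∉ D ∧ (x, false) ∉ D)

/-- A resolution derivation of the clause `D` from the CNF `K`: a nonempty
sequence of (proper) clauses, each a clause of `K`, a weakening of an earlier
clause, or a resolvent of two earlier clauses, ending with `D`.  Its size is
the length of the list. -/
def IsResDerivation (K : CNF) (L : List Clause) (D : Clause) : Prop :=
  L ≠ [] ∧ L.getLast? = some D ∧
    ∀ i : Fin L.length, Clause.Proper (L.get i) ∧ ResStep K (L.take i.val) (L.get i)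

/-- A resolution refutation of `K`: a derivation of the empty clause from `K`. -/
def IsResRefutation (K : CNF) (L : List Clause) : Prop := IsResDerivation K L ∅

/-- Extend an assignment of the variables X = {0, …, n-1} to all variables
(by `false` elsewhere). -/
def extendAssign {n : ℕ} (a : Fin n → Bool) : Assignment :=
  fun v => if h : v < n then a ⟨v, h⟩ else false

/-- The set of assignments to the n variables X = {0, …, n-1} satisfying `K`
(for `K` with variables among X this is the set of satisfying assignments of `K`). -/
def satSet (n : ℕ) (K : CNF) : Set (Fin n → Bool) := {a | CNF.Sat (extendAssign a) K}

/-- The CNF `A` (over X = {0, …, n-1} together with extension variables) discards the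
assignment `a` to X if no extension of `a` to all remaining variables satisfies `A`. -/
def Discards (n : ℕ) (A : CNF) (a : Fin n → Bool) : Prop :=
  ¬∃ b : Assignment, (∀ i : Fin n, b i.val = a i) ∧ CNF.Sat b A

/-- The set of assignments to X = {0, …, n-1} discarded by `A`. -/
def discardedSet (n : ℕ) (A : CNF) : Set (Fin n → Bool) := {a | Discards n A a}

/-! ## Derivation framework -/

def OK (K : CNF) (L : List Clause) : Prop :=
  ∀ i : Fin L.length, Clause.Proper (L.get i) ∧ ResStep K (L.take i.val) (L.get i)

lemma resStep_mono {K : CNF} {prev prev' : List Clause} {D : Clause}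
    (h : ResStep K prev D) (hsub : ∀ x ∈ prev, x ∈ prev') : ResStep K prev' D := by
  rcases h with h | ⟨E, hE, hsubE⟩ | ⟨C₁, h1, C₂, h2, x, hx1, hx2, hD, hn1, hn2⟩
  · exact Or.inl h
  · exact Or.inr (Or.inl ⟨E, hsub _ hE, hsubE⟩)
  · exact Or.inr (Or.inr ⟨C₁, hsub _ h1, C₂, hsub _ h2, x, hx1, hx2, hD, hn1, hn2⟩)

lemma ok_nil {K : CNF} : OK K [] := fun i => absurd i.2 (by simp)

lemma ok_snoc {K : CNF} {L : List Clause} {D : Clause} (h : OK K L)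
    (hp : Clause.Proper D) (hstep : ResStep K L D) : OK K (L ++ [D]) := by
  intro i
  rcases lt_or_ge i.val L.length with hi | hi
  · have hget : (L ++ [D]).get i = L.get ⟨i.val, hi⟩ := by
      simp [List.getElem_append_left hi]
    have htake : (L ++ [D]).take i.val = L.take i.val :=
      List.take_append_of_le_length (le_of_lt hi)
    rw [hget, htake]
    exact h ⟨i.val, hi⟩
  · have hlen : i.val = L.length := by
      have := i.2; simp at this; omega
    have hget : (L ++ [D]).get i = D := by
      simp only [List.get_eq_getElem, List.getElem_append_right (by omega : L.length ≤ i.val)]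
      simp [hlen]
    have htake : (L ++ [D]).take i.val = L := by
      rw [hlen]; exact List.take_left
    rw [hget, htake]
    exact ⟨hp, hstep⟩
/-! ## Properness helpers -/

lemma mem_vars_iff {C : Clause} {v : Var} : v ∈ Clause.vars C ↔ ∃ b, (v, b) ∈ C := by
  constructor
  · intro h
    rcases Finset.mem_image.1 h with ⟨l, hl, rfl⟩
    exact ⟨l.2, by simpa using hl⟩
  · rintro ⟨b, hb⟩
    exact Finset.mem_image.2 ⟨(v, b), hb, rfl⟩

lemma proper_mono {C D : Clause} (h : C ⊆ D) (hD : Clause.Proper D) : Clause.Proper C :=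
  fun v hv => hD v ⟨h hv.1, h hv.2⟩

lemma proper_insert_fresh {C : Clause} {n z : ℕ} (b : Bool) (hC : Clause.Proper C)
    (hCv : Clause.vars C ⊆ Finset.range n) (hz : n ≤ z) :
    Clause.Proper (insert (z, b) C) := by
  intro v hv
  rcases hv with ⟨h1, h2⟩
  rcases Finset.mem_insert.1 h1 with h1 | h1 <;> rcases Finset.mem_insert.1 h2 with h2 | h2
  · rw [Prod.ext_iff] at h1 h2; simp at h1 h2; rcases h1 with ⟨_, h1⟩; rcases h2 with ⟨_, h2⟩
    simp_all
  · have hv : v = z := (Prod.ext_iff.1 h1).1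
    have : z ∈ Clause.vars C := mem_vars_iff.2 ⟨false, hv ▸ h2⟩
    have := Finset.mem_range.1 (hCv this); omega
  · have hv : v = z := (Prod.ext_iff.1 h2).1
    have : z ∈ Clause.vars C := mem_vars_iff.2 ⟨true, hv ▸ h1⟩
    have := Finset.mem_range.1 (hCv this); omega
  · exact hC v ⟨h1, h2⟩

lemma proper_const_polarity {C : Clause} (b : Bool) (h : ∀ l ∈ C, l.2 = b) :
    Clause.Proper C := by
  intro v hv
  have h1 := h _ hv.1
  have h2 := h _ hv.2
  simp at h1 h2
  rw [h1] at h2; exact Bool.true_eq_false.mp h2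

/-! ## Deriving the unit clause `{z}` from `C` and its definition clauses -/

lemma peel (K : CNF) (n : ℕ) (C : Clause) (hinj : Set.InjOn Prod.fst (C : Set Lit))
    (hCp : Clause.Proper C) (hCv : Clause.vars C ⊆ Finset.range n) (z : Var) (hz : n ≤ z) :
    ∀ ls : List Lit, ls.Nodup → (∀ l ∈ ls, l ∈ C) →
    ∀ L : List Clause, OK K L → insert (z, true) ls.toFinset ∈ L →
      (∀ l ∈ ls, (insert (z, true) {(l.1, !l.2)} : Clause) ∈ L) →
      ∃ E : List Clause, OK K (L ++ E) ∧ ({(z, true)} : Clause) ∈ L ++ E ∧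
        E.length = ls.length := by
  intro ls
  induction ls with
  | nil =>
    intro _ _ L hOK hmem _
    exact ⟨[], by simpa using hOK, by simpa using hmem, rfl⟩
  | cons l ls ih =>
    obtain ⟨x, b⟩ := l
    intro hnd hsub L hOK hmem hdefs
    have hlC : ((x, b) : Lit) ∈ C := hsub _ (by simp)
    have hxlt : x < n := by
      have : x ∈ Clause.vars C := Finset.mem_image_of_mem _ hlC
      exact Finset.mem_range.1 (hCv this)
    have hzx : ∀ b1 b2 : Bool, ((z : Var), b1) ≠ (x, b2) := by
      intro b1 b2 h
      have hzz : z = x := (Prod.ext_iff.1 h).1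
      subst hzz
      exact absurd hxlt (not_lt.mpr hz)
    have hlnotin : ((x, b) : Lit) ∉ ls.toFinset := by
      simp only [List.mem_toFinset]; exact (List.nodup_cons.1 hnd).1
    set Dnew : Clause := insert (z, true) ls.toFinset with hDnew
    have hDnewp : Clause.Proper Dnew := by
      apply proper_mono (D := insert (z, true) C)
      · intro y hy
        rcases Finset.mem_insert.1 hy with h | h
        · simp [h]
        · exact Finset.mem_insert_of_mem (hsub y (by simp [List.mem_toFinset.1 h]))
      · exact proper_insert_fresh _ hCp hCv hz
    have hnotvar : ∀ b' : Bool, ((x : Var), b') ∉ Dnew := by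
      intro b' hb
      rcases Finset.mem_insert.1 hb with h | h
      · exact hzx true b' h.symm
      · have hmemC : ((x, b') : Lit) ∈ C := hsub _ (by simp [List.mem_toFinset.1 h])
        have heq : ((x, b') : Lit) = (x, b) := hinj hmemC hlC rfl
        rw [heq] at h
        exact hlnotin h
    have hzmem : ((z : Var), true) ∈ Dnew := Finset.mem_insert_self _ _
    have hdefmem : (insert (z, true) {((x : Var), !b)} : Clause) ∈ L := hdefs (x, b) (by simp)
    have hbigmem : insert (z, true) (insert ((x : Var), b) ls.toFinset) ∈ L := by
      simpa using hmem
    have hstep : ResStep K L Dnew := by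
      refine Or.inr (Or.inr ?_)
      cases b with
      | true =>
        refine ⟨insert (z, true) (insert ((x : Var), true) ls.toFinset), hbigmem,
          insert (z, true) {((x : Var), false)}, by simpa using hdefmem, x,
          by simp, by simp, ?_, hnotvar true, hnotvar false⟩
        rw [Finset.erase_insert_of_ne (hzx true true), Finset.erase_insert_of_ne (hzx true false),
          Finset.erase_insert hlnotin, Finset.erase_singleton]
        ext y; simp [hDnew]
        try tauto
      | false =>
        refine ⟨insert (z, true) {((x : Var), true)}, by simpa using hdefmem,
          insert (z, true) (insert ((x : Var), false) ls.toFinset), hbigmem, x,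
          by simp, by simp, ?_, hnotvar true, hnotvar false⟩
        rw [Finset.erase_insert_of_ne (hzx true true), Finset.erase_insert_of_ne (hzx true false),
          Finset.erase_insert hlnotin, Finset.erase_singleton]
        ext y; simp [hDnew]
        try tauto
    have hOK' : OK K (L ++ [Dnew]) := ok_snoc hOK hDnewp hstep
    have hmem' : insert (z, true) ls.toFinset ∈ L ++ [Dnew] := by simp [hDnew]
    have hdefs' : ∀ l' ∈ ls, (insert (z, true) {(l'.1, !l'.2)} : Clause) ∈ L ++ [Dnew] :=
      fun l' hl' => List.mem_append_left _ (hdefs l' (by simp [hl']))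
    obtain ⟨E', hOK'', hz'', hlen''⟩ := ih (List.nodup_cons.1 hnd).2
      (fun l' hl' => hsub l' (by simp [hl'])) (L ++ [Dnew]) hOK' hmem' hdefs'
    refine ⟨Dnew :: E', ?_, ?_, ?_⟩
    · rwa [show L ++ Dnew :: E' = (L ++ [Dnew]) ++ E' by simp]
    · rwa [show L ++ Dnew :: E' = (L ++ [Dnew]) ++ E' by simp]
    · simp [hlen'']

lemma derive_unit (K : CNF) (n : ℕ) (C : Clause) (hinj : Set.InjOn Prod.fst (C : Set Lit))
    (hCp : Clause.Proper C) (hCv : Clause.vars C ⊆ Finset.range n) (z : Var) (hz : n ≤ z)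
    (L : List Clause) (hOK : OK K L) (hC : C ∈ L)
    (hdefs : ∀ l ∈ C, (insert (z, true) {(l.1, !l.2)} : Clause) ∈ L) :
    ∃ E : List Clause, OK K (L ++ E) ∧ ({(z, true)} : Clause) ∈ L ++ E ∧
      E.length = C.card + 1 := by
  have hstep : ResStep K L (insert (z, true) C) :=
    Or.inr (Or.inl ⟨C, hC, Finset.subset_insert _ _⟩)
  have hOK' : OK K (L ++ [insert (z, true) C]) :=
    ok_snoc hOK (proper_insert_fresh _ hCp hCv hz) hstep
  obtain ⟨E', hOK'', hmem'', hlen''⟩ := peel K n C hinj hCp hCv z hz C.toList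
    C.nodup_toList (fun l hl => Finset.mem_toList.1 hl) (L ++ [insert (z, true) C]) hOK'
    (by rw [Finset.toList_toFinset]; simp)
    (fun l hl => List.mem_append_left _ (hdefs l (Finset.mem_toList.1 hl)))
  refine ⟨insert (z, true) C :: E', ?_, ?_, ?_⟩
  · rwa [show L ++ insert (z, true) C :: E' = (L ++ [insert (z, true) C]) ++ E' by simp]
  · rwa [show L ++ insert (z, true) C :: E' = (L ++ [insert (z, true) C]) ++ E' by simp]
  · simp [hlen'', Finset.length_toList]
/-! ## The chain: resolving the big negative clause with the units -/

def chainClause (n m j : ℕ) : Clause :=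
  (Finset.Ico j m).image (fun k => ((n + k : Var), false))

lemma chainClause_proper (n m j : ℕ) : Clause.Proper (chainClause n m j) := by
  apply proper_const_polarity false
  intro l hl
  rcases Finset.mem_image.1 hl with ⟨k, _, rfl⟩
  rfl

lemma chain (K : CNF) (n m : ℕ) :
    ∀ d j, j + d = m → ∀ L : List Clause, OK K L → chainClause n m j ∈ L →
      (∀ k, j ≤ k → k < m → ({((n + k : Var), true)} : Clause) ∈ L) →
      ∃ E : List Clause, OK K (L ++ E) ∧ (∅ : Clause) ∈ L ++ E ∧ E.length = d := by
  intro d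
  induction d with
  | zero =>
    intro j hj L hOK hmem _
    refine ⟨[], by simpa using hOK, ?_, rfl⟩
    have : chainClause n m j = ∅ := by
      unfold chainClause
      rw [show j = m by omega]
      simp
    rw [this] at hmem; simpa using hmem
  | succ d ih =>
    intro j hj L hOK hmem hunits
    have hjm : j < m := by omega
    have hinj : Function.Injective (fun k : ℕ => ((n + k : Var), false)) := by
      intro a b h
      have := (Prod.ext_iff.1 h).1
      simpa using this
    have hDeq : chainClause n m (j + 1) = (chainClause n m j).erase ((n + j : Var), false) := by
      unfold chainClause
      rw [← Finset.image_erase hinj, ← Nat.Ico_succ_left_eq_erase_Ico]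
    have hstep : ResStep K L (chainClause n m (j + 1)) := by
      refine Or.inr (Or.inr ⟨{((n + j : Var), true)}, hunits j le_rfl hjm,
        chainClause n m j, hmem, n + j, by simp, ?_, ?_, ?_, ?_⟩)
      · exact Finset.mem_image_of_mem _ (Finset.mem_Ico.2 ⟨le_rfl, hjm⟩)
      · rw [hDeq, Finset.erase_singleton]
        simp
      · intro hc
        rcases Finset.mem_image.1 hc with ⟨k, _, hk⟩
        exact Bool.true_eq_false.mp ((Prod.ext_iff.1 hk).2).symm
      · rw [hDeq]
        exact Finset.notMem_erase _ _
    have hOK' := ok_snoc hOK (chainClause_proper n m (j + 1)) hstep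
    obtain ⟨E', hOK'', hmem'', hlen''⟩ := ih (j + 1) (by omega) (L ++ [chainClause n m (j + 1)])
      hOK' (by simp) (fun k hk1 hk2 => List.mem_append_left _ (hunits k (by omega) hk2))
    refine ⟨chainClause n m (j + 1) :: E', ?_, ?_, ?_⟩
    · rwa [show L ++ chainClause n m (j+1) :: E' = (L ++ [chainClause n m (j+1)]) ++ E' by simp]
    · rwa [show L ++ chainClause n m (j+1) :: E' = (L ++ [chainClause n m (j+1)]) ++ E' by simp]
    · simp [hlen'']
/-! ## The auxiliary CNF and the full refutation -/

noncomputable def defsFor (n k : ℕ) (C : Clause) : List Clause :=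
  insert ((n + k : Var), false) C ::
    C.toList.map (fun l => insert ((n + k : Var), true) ({(l.1, !l.2)} : Clause))

noncomputable def extList (n : ℕ) (TL : List Clause) : List Clause :=
  chainClause n TL.length 0 ::
    (List.range TL.length).flatMap (fun k => defsFor n k (TL.getD k ∅))

lemma ok_axioms (K : CNF) (L : List Clause)
    (h : ∀ D ∈ L, D ∈ K ∧ Clause.Proper D) : OK K L := by
  intro i
  have hm : L.get i ∈ L := by
    rw [List.get_eq_getElem]; exact List.getElem_mem i.2
  exact ⟨(h _ hm).2, Or.inl (h _ hm).1⟩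

lemma proper_singleton (l : Lit) : Clause.Proper ({l} : Clause) := by
  intro v hv
  rcases hv with ⟨h1, h2⟩
  rw [Finset.mem_singleton] at h1 h2
  rw [← h1] at h2
  simpa using congrArg Prod.snd h2

lemma proper_empty : Clause.Proper (∅ : Clause) := by
  intro v hv
  exact absurd hv.1 (Finset.notMem_empty _)

lemma all_units (K : CNF) (n : ℕ) (TL : List Clause)
    (h3 : ∀ k, k < TL.length →
      Set.InjOn Prod.fst ((TL.getD k ∅ : Clause) : Set Lit) ∧ Clause.Proper (TL.getD k ∅) ∧
      Clause.vars (TL.getD k ∅) ⊆ Finset.range n ∧ (TL.getD k ∅).card = 3) :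
    ∀ j, j ≤ TL.length → ∀ L : List Clause, OK K L →
      (∀ k, k < TL.length → TL.getD k ∅ ∈ L) →
      (∀ k, k < TL.length → ∀ l ∈ TL.getD k ∅,
        (insert ((n + k : Var), true) {(l.1, !l.2)} : Clause) ∈ L) →
      ∃ E : List Clause, OK K (L ++ E) ∧
        (∀ k, k < j → ({((n + k : Var), true)} : Clause) ∈ L ++ E) ∧
        E.length = 4 * j := by
  intro j
  induction j with
  | zero =>
    intro _ L hOK _ _
    exact ⟨[], by simpa using hOK, by omega, rfl⟩
  | succ j ih =>
    intro hj L hOK hmem hdefs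
    obtain ⟨E, hOK1, hunits1, hlen1⟩ := ih (by omega) L hOK hmem hdefs
    have hjlt : j < TL.length := by omega
    obtain ⟨hinj, hp, hv, hcard⟩ := h3 j hjlt
    obtain ⟨E2, hOK2, hu2, hlen2⟩ := derive_unit K n (TL.getD j ∅) hinj hp hv (n + j)
      (by omega) (L ++ E) hOK1 (List.mem_append_left _ (hmem j hjlt))
      (fun l hl => List.mem_append_left _ (hdefs j hjlt l hl))
    refine ⟨E ++ E2, ?_, ?_, ?_⟩
    · rwa [← List.append_assoc]
    · intro k hk
      rcases Nat.lt_or_ge k j with hk' | hk'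
      · rw [← List.append_assoc]
        exact List.mem_append_left _ (hunits1 k hk')
      · have : k = j := by omega
        subst this
        rwa [← List.append_assoc]
    · rw [List.length_append, hlen1, hlen2, hcard]; omega

lemma refutation_exists (n : ℕ) (T : CNF) (h3 : Is3CNF T)
    (hv : CNF.vars T ⊆ Finset.range n) :
    CNF.Proper ((extList n T.toList).toFinset) ∧
    ∃ L : List Clause, IsResRefutation (T ∪ (extList n T.toList).toFinset) L ∧
      L.length = 10 * T.card + 2 := by
  set TL := T.toList with hTL
  set m := TL.length with hm
  have hmcard : m = T.card := Finset.length_toList T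
  set K : CNF := T ∪ (extList n TL).toFinset with hK
  -- facts about each clause
  have hkfacts : ∀ k, k < m → (TL.getD k ∅) ∈ T ∧
      Set.InjOn Prod.fst ((TL.getD k ∅ : Clause) : Set Lit) ∧ Clause.Proper (TL.getD k ∅) ∧
      Clause.vars (TL.getD k ∅) ⊆ Finset.range n ∧ (TL.getD k ∅).card = 3 := by
    intro k hk
    have hmemT : TL.getD k ∅ ∈ T := by
      rw [List.getD_eq_getElem _ _ hk]
      exact Finset.mem_toList.1 (List.getElem_mem hk)
    obtain ⟨hc3, hv3⟩ := h3 _ hmemT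
    have hinj : Set.InjOn Prod.fst ((TL.getD k ∅ : Clause) : Set Lit) := by
      rw [← Finset.card_image_iff]
      rw [show (TL.getD k ∅).image Prod.fst = Clause.vars (TL.getD k ∅) from rfl, hc3, hv3]
    have hprop : Clause.Proper (TL.getD k ∅) := by
      intro v hv'
      have := hinj hv'.1 hv'.2 rfl
      exact Bool.true_eq_false.mp (Prod.ext_iff.1 this).2
    have hvars : Clause.vars (TL.getD k ∅) ⊆ Finset.range n :=
      (Finset.le_sup hmemT).trans hv
    exact ⟨hmemT, hinj, hprop, hvars, hc3⟩
  -- the axiom list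
  set Ax : List Clause := TL ++ extList n TL with hAx
  have hAxFacts : ∀ D ∈ Ax, D ∈ K ∧ Clause.Proper D := by
    intro D hD
    rcases List.mem_append.1 hD with hD | hD
    · have hDT : D ∈ T := Finset.mem_toList.1 hD
      refine ⟨Finset.mem_union_left _ hDT, ?_⟩
      obtain ⟨hc3, hv3⟩ := h3 _ hDT
      have hinj : Set.InjOn Prod.fst (D : Set Lit) := by
        rw [← Finset.card_image_iff]
        rw [show D.image Prod.fst = Clause.vars D from rfl, hc3, hv3]
      intro v hv'
      have := hinj hv'.1 hv'.2 rfl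
      exact Bool.true_eq_false.mp (Prod.ext_iff.1 this).2
    · refine ⟨Finset.mem_union_right _ (List.mem_toFinset.2 hD), ?_⟩
      rcases List.mem_cons.1 hD with hD | hD
      · rw [hD]; exact chainClause_proper n m 0
      · rcases List.mem_flatMap.1 hD with ⟨k, hk, hD⟩
        have hk' : k < m := List.mem_range.1 hk
        obtain ⟨_, _, hprop, hvars, _⟩ := hkfacts k hk'
        rcases List.mem_cons.1 hD with hD | hD
        · rw [hD]; exact proper_insert_fresh _ hprop hvars (by omega)
        · rcases List.mem_map.1 hD with ⟨l, hl, rfl⟩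
          have hl' : l ∈ TL.getD k ∅ := Finset.mem_toList.1 hl
          apply proper_insert_fresh _ (proper_singleton _) _ (by omega : n ≤ n + k)
          intro v hv'
          rcases mem_vars_iff.1 hv' with ⟨b, hb⟩
          rw [Finset.mem_singleton] at hb
          have : v = l.1 := (Prod.ext_iff.1 hb).1
          subst this
          exact hvars (mem_vars_iff.2 ⟨l.2, by simpa using hl'⟩)
  have hOKAx : OK K Ax := ok_axioms _ _ hAxFacts
  have hAproper : CNF.Proper ((extList n TL).toFinset) := by
    intro D hD
    exact (hAxFacts D (List.mem_append_right _ (List.mem_toFinset.1 hD))).2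
  refine ⟨hAproper, ?_⟩
  -- memberships of axioms
  have hmemC : ∀ k, k < m → TL.getD k ∅ ∈ Ax := by
    intro k hk
    apply List.mem_append_left
    rw [List.getD_eq_getElem _ _ hk]
    exact List.getElem_mem hk
  have hmemDefs : ∀ k, k < m → ∀ l ∈ TL.getD k ∅,
      (insert ((n + k : Var), true) {(l.1, !l.2)} : Clause) ∈ Ax := by
    intro k hk l hl
    apply List.mem_append_right
    refine List.mem_cons_of_mem _ (List.mem_flatMap.2 ⟨k, List.mem_range.2 hk, ?_⟩)
    exact List.mem_cons_of_mem _ (List.mem_map.2 ⟨l, Finset.mem_toList.2 hl, rfl⟩)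
  -- derive all unit clauses
  obtain ⟨E1, hOK1, hunits1, hlen1⟩ := all_units K n TL
    (fun k hk => (hkfacts k hk).2) m le_rfl Ax hOKAx hmemC hmemDefs
  -- run the chain
  have hbig : chainClause n m 0 ∈ Ax ++ E1 :=
    List.mem_append_left _ (List.mem_append_right _ List.mem_cons_self)
  obtain ⟨E2, hOK2, hempty2, hlen2⟩ := chain K n m m 0 (by omega) (Ax ++ E1) hOK1 hbig
    (fun k _ hk2 => hunits1 k hk2)
  -- final weakening step to place ∅ at the end
  have hstep : ResStep K ((Ax ++ E1) ++ E2) (∅ : Clause) :=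
    Or.inr (Or.inl ⟨∅, hempty2, Finset.Subset.refl _⟩)
  have hOK3 : OK K (((Ax ++ E1) ++ E2) ++ [∅]) := ok_snoc hOK2 proper_empty hstep
  refine ⟨((Ax ++ E1) ++ E2) ++ [∅], ⟨by simp, ?_, hOK3⟩, ?_⟩
  · exact List.getLast?_concat
  · -- length computation
    have hAxlen : Ax.length = m + (1 + 4 * m) := by
      rw [hAx, List.length_append, hm]
      congr 1
      rw [extList, List.length_cons, List.length_flatMap]
      have : (List.range TL.length).map (fun k => ((defsFor n k (TL.getD k ∅)).length)) =
          (List.range TL.length).map (fun _ => 4) := by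
        apply List.map_congr_left
        intro k hk
        have hk' : k < m := List.mem_range.1 hk
        obtain ⟨_, _, _, _, hc⟩ := hkfacts k hk'
        simp only [defsFor, List.length_cons, List.length_map, Finset.length_toList, hc]
      rw [show (fun k => (defsFor n k (TL.getD k ∅)).length) = 
          (List.length ∘ fun k => defsFor n k (TL.getD k ∅)) from rfl] at this
      rw [show List.map (fun a => (defsFor n a (TL.getD a ∅)).length) (List.range TL.length) = _ from this]
      simp [List.map_const', List.sum_replicate, hm]
      omega
    simp only [List.length_append, hAxlen, hlen1, hlen2, List.length_singleton]
    omega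
/-! ## Discarded assignments satisfy T -/

lemma discard_subset (n : ℕ) (T : CNF) (hv : CNF.vars T ⊆ Finset.range n) :
    discardedSet n ((extList n T.toList).toFinset) ⊆ satSet n T := by
  intro a ha
  by_contra hns
  simp only [satSet, Set.mem_setOf_eq, CNF.Sat, not_forall] at hns
  obtain ⟨C₀, hC₀, hnsat⟩ := hns
  set TL := T.toList with hTL
  set m := TL.length with hm
  -- the index of a falsified clause
  obtain ⟨k₀, hk₀, heq₀⟩ := List.getElem_of_mem (Finset.mem_toList.2 hC₀)
  -- the extension assignment
  set b : Assignment := fun v =>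
    if h : v < n then a ⟨v, h⟩
    else if Clause.Sat (extendAssign a) (TL.getD (v - n) ∅) then true else false with hb
  have hagree : ∀ v, v < n → b v = extendAssign a v := by
    intro v hv'
    rw [hb]
    simp only [hv', dif_pos]
    rw [extendAssign]
    simp [hv']
  have hbz : ∀ k, b (n + k) = if Clause.Sat (extendAssign a) (TL.getD k ∅) then true else false := by
    intro k
    rw [hb]
    simp only []
    rw [dif_neg (not_lt.mpr (Nat.le_add_right n k)), Nat.add_sub_cancel_left]
  have hlit : ∀ (C : Clause), Clause.vars C ⊆ Finset.range n →
      ∀ l ∈ C, Lit.eval b l = Lit.eval (extendAssign a) l := by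
    intro C hCv l hl
    have : l.1 < n := Finset.mem_range.1 (hCv (Finset.mem_image_of_mem _ hl))
    rw [Lit.eval, Lit.eval, hagree _ this]
  apply ha
  refine ⟨b, ?_, ?_⟩
  · intro i
    rw [hb]
    simp only [i.2, dif_pos]
  · -- b satisfies the extension CNF
    intro D hD
    rw [List.mem_toFinset] at hD
    have hkfact : ∀ k, k < m → TL.getD k ∅ ∈ T ∧ Clause.vars (TL.getD k ∅) ⊆ Finset.range n := by
      intro k hk
      have hmemT : TL.getD k ∅ ∈ T := by
        rw [List.getD_eq_getElem _ _ hk]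
        exact Finset.mem_toList.1 (List.getElem_mem hk)
      exact ⟨hmemT, (Finset.le_sup hmemT).trans hv⟩
    rcases List.mem_cons.1 hD with hD | hD
    · -- the big clause
      subst hD
      refine ⟨((n + k₀ : Var), false), ?_, ?_⟩
      · exact Finset.mem_image_of_mem _ (Finset.mem_Ico.2 ⟨Nat.zero_le _, hk₀⟩)
      · have heqC : TL.getD k₀ ∅ = C₀ := by rw [List.getD_eq_getElem _ _ hk₀, heq₀]
        have hbf : b (n + k₀) = false := by rw [hbz k₀, heqC, if_neg hnsat]
        simp [Lit.eval, hbf]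
    · rcases List.mem_flatMap.1 hD with ⟨k, hk, hD⟩
      have hk' : k < m := List.mem_range.1 hk
      obtain ⟨hmemT, hvars⟩ := hkfact k hk'
      by_cases hsat : Clause.Sat (extendAssign a) (TL.getD k ∅)
      · -- the clause C_k is satisfied: the z-literals do the job, or the clause itself
        rcases List.mem_cons.1 hD with hD | hD
        · subst hD
          obtain ⟨l, hl, hleval⟩ := hsat
          refine ⟨l, Finset.mem_insert_of_mem hl, ?_⟩
          rw [hlit _ hvars l hl, hleval]
        · rcases List.mem_map.1 hD with ⟨l, hl, rfl⟩
          refine ⟨((n + k : Var), true), Finset.mem_insert_self _ _, ?_⟩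
          have hbt : b (n + k) = true := by rw [hbz k, if_pos hsat]
          simp [Lit.eval, hbt]
      · -- the clause C_k is falsified: use the z-literal / the negated literal
        rcases List.mem_cons.1 hD with hD | hD
        · subst hD
          refine ⟨((n + k : Var), false), Finset.mem_insert_self _ _, ?_⟩
          have hbf : b (n + k) = false := by rw [hbz k, if_neg hsat]
          simp [Lit.eval, hbf]
        · rcases List.mem_map.1 hD with ⟨l, hl, rfl⟩
          have hl' : l ∈ TL.getD k ∅ := Finset.mem_toList.1 hl
          have hlf : Lit.eval (extendAssign a) l = false := by
            by_contra hc
            exact hsat ⟨l, hl', by simpa using hc⟩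
          refine ⟨(l.1, !l.2), Finset.mem_insert_of_mem (Finset.mem_singleton_self _), ?_⟩
          have hl1 : l.1 < n := Finset.mem_range.1 (hvars (Finset.mem_image_of_mem _ hl'))
          rw [Lit.eval] at hlf ⊢
          simp only [hagree _ hl1] at *
          cases hp : l.2 <;> rw [hp] at hlf <;> simp_all
/-! ## Counting satisfying assignments -/

lemma agree_card (n : ℕ) (s : Finset (Fin n)) (b : Fin n → Bool) :
    (Finset.univ.filter (fun a : Fin n → Bool => ∀ i, i ∉ s → a i = b i)).card
      = 2 ^ s.card := by
  have e : {a : Fin n → Bool // ∀ i, i ∉ s → a i = b i} ≃ (↥s → Bool) :=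
    { toFun := fun a i => a.1 i
      invFun := fun f => ⟨fun i => if h : i ∈ s then f ⟨i, h⟩ else b i,
        fun i hi => by simp [hi]⟩
      left_inv := by
        intro a
        apply Subtype.ext
        funext i
        by_cases h : i ∈ s <;> simp [h, a.2 i]
      right_inv := by
        intro f
        funext i
        simp }
  rw [← Fintype.card_subtype, Fintype.card_congr e, Fintype.card_fun]
  simp

lemma clause_sat_congr {C : Clause} {a a' : Assignment}
    (h : ∀ v ∈ Clause.vars C, a v = a' v) : Clause.Sat a C ↔ Clause.Sat a' C := by
  unfold Clause.Sat
  apply exists_congr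
  intro l
  apply and_congr_right
  intro hl
  rw [Lit.eval, Lit.eval, h l.1 (Finset.mem_image_of_mem _ hl)]

noncomputable def killF (C : Clause) {n : ℕ} (a : Fin n → Bool) : Fin n → Bool := fun i =>
  if ((i : ℕ), true) ∈ C then false else if ((i : ℕ), false) ∈ C then true else a i

lemma killF_falsifies {C : Clause} {n : ℕ} (hCp : Clause.Proper C)
    (hCv : Clause.vars C ⊆ Finset.range n) (a : Fin n → Bool) :
    ¬ Clause.Sat (extendAssign (killF C a)) C := by
  rintro ⟨⟨v, p⟩, hl, heval⟩
  have hvn : v < n := Finset.mem_range.1 (hCv (Finset.mem_image_of_mem _ hl))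
  have hext : extendAssign (killF C a) v = killF C a ⟨v, hvn⟩ := by
    rw [extendAssign]; simp [hvn]
  rw [Lit.eval] at heval
  simp only at heval
  cases p
  · -- (v, false) ∈ C, so killF gives true, eval is !true = false
    have hnt : ((v : Var), true) ∉ C := fun hc => hCp v ⟨hc, hl⟩
    have : killF C a ⟨v, hvn⟩ = true := by
      rw [killF]; simp only [if_neg hnt, if_pos hl]
    rw [hext, this] at heval
    simp at heval
  · have : killF C a ⟨v, hvn⟩ = false := by
      rw [killF]; simp only [if_pos hl]
    rw [hext, this] at heval
    simp at heval

lemma killF_eq_of_not_mem {C : Clause} {n : ℕ} (a : Fin n → Bool) {i : Fin n}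
    (h : (i : ℕ) ∉ Clause.vars C) : killF C a i = a i := by
  rw [killF]
  rw [if_neg (fun hc => h (mem_vars_iff.2 ⟨true, hc⟩)),
    if_neg (fun hc => h (mem_vars_iff.2 ⟨false, hc⟩))]

lemma killF_eq_self {C : Clause} {n : ℕ} (hCv : Clause.vars C ⊆ Finset.range n)
    {a : Fin n → Bool} (h : ¬ Clause.Sat (extendAssign a) C) : killF C a = a := by
  funext i
  have hall : ∀ l ∈ C, Lit.eval (extendAssign a) l = false := by
    intro l hl
    by_contra hc
    exact h ⟨l, hl, by simpa using hc⟩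
  have hexti : extendAssign a (i : ℕ) = a i := by
    rw [extendAssign]; simp [i.2]
  rw [killF]
  by_cases h1 : ((i : ℕ), true) ∈ C
  · have := hall _ h1
    rw [Lit.eval] at this
    simp only [hexti] at this
    simp [h1, this.symm]
  · by_cases h2 : ((i : ℕ), false) ∈ C
    · have := hall _ h2
      rw [Lit.eval] at this
      simp only [hexti] at this
      simp only [if_neg h1, if_pos h2]
      simpa using this.symm
    · simp [h1, h2]

lemma killF_congr {C : Clause} {n : ℕ} {a a' : Fin n → Bool}
    (h : ∀ i : Fin n, (i : ℕ) ∉ Clause.vars C → a i = a' i) : killF C a = killF C a' := by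
  funext i
  rw [killF, killF]
  by_cases h1 : ((i : ℕ), true) ∈ C
  · simp [h1]
  · by_cases h2 : ((i : ℕ), false) ∈ C
    · simp [h1, h2]
    · simp only [if_neg h1, if_neg h2]
      exact h i (fun hc => by
        rcases mem_vars_iff.1 hc with ⟨b, hb⟩
        cases b
        exacts [h2 hb, h1 hb])

lemma ext_killF_agree {C : Clause} {n : ℕ} (a : Fin n → Bool) {v : Var}
    (h : v ∉ Clause.vars C) : extendAssign (killF C a) v = extendAssign a v := by
  rw [extendAssign, extendAssign]
  by_cases hv : v < n
  · simp only [hv, dif_pos]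
    exact killF_eq_of_not_mem a h
  · simp [hv]

lemma sat_count_step (n : ℕ) (C : Clause) (T' : CNF) (hCp : Clause.Proper C)
    (hv3 : (Clause.vars C).card = 3) (hCv : Clause.vars C ⊆ Finset.range n)
    (hdisj : Disjoint (Clause.vars C) (CNF.vars T')) :
    8 * (Finset.univ.filter
        (fun a : Fin n → Bool => CNF.Sat (extendAssign a) (insert C T'))).card
      = 7 * (Finset.univ.filter
        (fun a : Fin n → Bool => CNF.Sat (extendAssign a) T')).card := by
  set S' := Finset.univ.filter (fun a : Fin n → Bool => CNF.Sat (extendAssign a) T') with hS'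
  have hsatmem : ∀ a : Fin n → Bool, a ∈ S' ↔ CNF.Sat (extendAssign a) T' := by
    intro a; rw [hS']; simp
  -- preservation of T'-satisfaction under killF
  have hpres : ∀ a : Fin n → Bool,
      (CNF.Sat (extendAssign (killF C a)) T' ↔ CNF.Sat (extendAssign a) T') := by
    intro a
    unfold CNF.Sat
    apply forall₂_congr
    intro D hD
    apply clause_sat_congr
    intro v hv
    apply ext_killF_agree
    intro hc
    exact Finset.disjoint_left.1 hdisj hc (Finset.mem_of_subset (Finset.le_sup hD) hv)
  -- split S'
  have hsplit := Finset.card_filter_add_card_filter_not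
    (s := S') (p := fun a => Clause.Sat (extendAssign a) C)
  set S := S'.filter (fun a => Clause.Sat (extendAssign a) C) with hS
  set bad := S'.filter (fun a => ¬ Clause.Sat (extendAssign a) C) with hbad
  -- the filter for insert is S
  have hSfilter : Finset.univ.filter
      (fun a : Fin n → Bool => CNF.Sat (extendAssign a) (insert C T')) = S := by
    rw [hS, hS', Finset.filter_filter]
    apply Finset.filter_congr
    intro a _
    unfold CNF.Sat
    rw [Finset.forall_mem_insert]
    tauto
  -- fiber counting
  set sC : Finset (Fin n) := Finset.univ.filter (fun i : Fin n => (i : ℕ) ∈ Clause.vars C)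
    with hsC
  have hsCcard : sC.card = 3 := by
    rw [← hv3]
    apply Finset.card_bij (fun (i : Fin n) _ => (i : ℕ))
    · intro i hi; rw [hsC] at hi; simpa using hi
    · intro i _ j _ h; exact Fin.val_injective h
    · intro v hv
      have hvn : v < n := Finset.mem_range.1 (hCv hv)
      exact ⟨⟨v, hvn⟩, by rw [hsC]; simpa using hv, rfl⟩
  have hmapsto : ∀ a ∈ S', killF C a ∈ bad := by
    intro a ha
    rw [hbad, Finset.mem_filter]
    exact ⟨Finset.mem_filter.2 ⟨Finset.mem_univ _,
        (hpres a).2 ((hsatmem a).1 ha)⟩,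
      killF_falsifies hCp hCv a⟩
  have hfiber : ∀ b ∈ bad, (S'.filter (fun a => killF C a = b)).card = 8 := by
    intro b hb
    rw [hbad, Finset.mem_filter] at hb
    obtain ⟨hbS', hbnQ⟩ := hb
    have hbP : CNF.Sat (extendAssign b) T' := (hsatmem b).1 hbS'
    have : S'.filter (fun a => killF C a = b)
        = Finset.univ.filter (fun a : Fin n → Bool => ∀ i, i ∉ sC → a i = b i) := by
      ext a
      simp only [Finset.mem_filter, Finset.mem_univ, true_and, hsatmem]
      constructor
      · rintro ⟨haP, hkill⟩
        intro i hi
        rw [hsC] at hi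
        simp only [Finset.mem_filter, Finset.mem_univ, true_and] at hi
        rw [← hkill]
        exact (killF_eq_of_not_mem a hi).symm
      · intro hagree
        have hoff : ∀ i : Fin n, (i : ℕ) ∉ Clause.vars C → a i = b i := by
          intro i hi
          apply hagree
          rw [hsC]; simp [hi]
        constructor
        · -- a satisfies T'
          intro D hD
          rw [clause_sat_congr (a' := extendAssign b) ?_]
          · exact hbP D hD
          · intro v hv
            rw [extendAssign, extendAssign]
            by_cases hvn : v < n
            · simp only [hvn, dif_pos]
              exact hoff ⟨v, hvn⟩ (fun hc =>
                Finset.disjoint_left.1 hdisj hc (Finset.mem_of_subset (Finset.le_sup hD) hv))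
            · simp [hvn]
        · rw [killF_congr hoff]
          exact killF_eq_self hCv hbnQ
    rw [this, agree_card, hsCcard]
    norm_num
  have hsum : S'.card = 8 * bad.card := by
    rw [Finset.card_eq_sum_card_fiberwise hmapsto]
    rw [Finset.sum_congr rfl hfiber, Finset.sum_const, smul_eq_mul]
    ring
  rw [hSfilter]
  omega

lemma sat_count (n : ℕ) (T : CNF) (h3 : Is3CNF T) (hv : CNF.vars T ⊆ Finset.range n)
    (hdisj : ∀ C₁ ∈ T, ∀ C₂ ∈ T, C₁ ≠ C₂ → Disjoint (Clause.vars C₁) (Clause.vars C₂)) :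
    8 ^ T.card *
      (Finset.univ.filter (fun a : Fin n → Bool => CNF.Sat (extendAssign a) T)).card
      ≤ 7 ^ T.card * 2 ^ n := by
  induction T using Finset.induction_on with
  | empty =>
    simp only [Finset.card_empty, pow_zero, one_mul]
    have : (Finset.univ.filter (fun a : Fin n → Bool => CNF.Sat (extendAssign a) ∅))
        = Finset.univ := by
      apply Finset.filter_true_of_mem
      intro a _
      intro D hD
      exact absurd hD (Finset.notMem_empty _)
    rw [this]
    simp [Fintype.card_fun]
  | @insert C T' hC ih =>
    have h3' : Is3CNF T' := fun D hD => h3 D (Finset.mem_insert_of_mem hD)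
    have hv' : CNF.vars T' ⊆ Finset.range n :=
      le_trans (Finset.sup_mono (Finset.subset_insert _ _)) hv
    have hdisj' : ∀ C₁ ∈ T', ∀ C₂ ∈ T', C₁ ≠ C₂ → Disjoint (Clause.vars C₁) (Clause.vars C₂) :=
      fun C₁ h1 C₂ h2 hne => hdisj C₁ (Finset.mem_insert_of_mem h1) C₂
        (Finset.mem_insert_of_mem h2) hne
    have ihr := ih h3' hv' hdisj'
    obtain ⟨hc3, hv3⟩ := h3 C (Finset.mem_insert_self _ _)
    have hCp : Clause.Proper C := by
      have hinj : Set.InjOn Prod.fst (C : Set Lit) := by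
        rw [← Finset.card_image_iff]
        rw [show C.image Prod.fst = Clause.vars C from rfl, hc3, hv3]
      intro v hv'
      have := hinj hv'.1 hv'.2 rfl
      simpa using congrArg Prod.snd this
    have hCv : Clause.vars C ⊆ Finset.range n :=
      le_trans (Finset.le_sup (Finset.mem_insert_self _ _)) hv
    have hdisjC : Disjoint (Clause.vars C) (CNF.vars T') := by
      rw [CNF.vars, Finset.disjoint_sup_right]
      intro D hD
      exact hdisj C (Finset.mem_insert_self _ _) D (Finset.mem_insert_of_mem hD)
        (fun hc => hC (hc ▸ hD))
    have hkey := sat_count_step n C T' hCp hv3 hCv hdisjC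
    rw [Finset.card_insert_of_notMem hC]
    calc 8 ^ (T'.card + 1) *
        (Finset.univ.filter
          (fun a : Fin n → Bool => CNF.Sat (extendAssign a) (insert C T'))).card
        = 8 ^ T'.card * (8 * (Finset.univ.filter
            (fun a : Fin n → Bool => CNF.Sat (extendAssign a) (insert C T'))).card) := by
          ring
      _ = 8 ^ T'.card * (7 * (Finset.univ.filter
            (fun a : Fin n → Bool => CNF.Sat (extendAssign a) T')).card) := by rw [hkey]
      _ = 7 * (8 ^ T'.card * (Finset.univ.filter
            (fun a : Fin n → Bool => CNF.Sat (extendAssign a) T')).card) := by ring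
      _ ≤ 7 * (7 ^ T'.card * 2 ^ n) := Nat.mul_le_mul_left _ ihr
      _ = 7 ^ (T'.card + 1) * 2 ^ n := by ring

/-! ## The analytic bound -/

lemma ratio_bound (ε : ℝ) (hε0 : 0 < ε) (hε1 : ε < 1) :
    ((7:ℝ)/8) ^ (⌈Real.log (ε/2) / Real.log (7/8)⌉₊ : ℕ) ≤ ε / 2 := by
  set t := Real.log (ε/2) / Real.log (7/8) with ht
  set m := ⌈t⌉₊ with hm
  have hlogr : Real.log (7/8) < 0 := Real.log_neg (by norm_num) (by norm_num)
  have hε2 : (0:ℝ) < ε/2 := by linarith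
  have hε2lt : ε/2 < 1 := by linarith
  have hlogε : Real.log (ε/2) < 0 := Real.log_neg hε2 hε2lt
  have hmt : t ≤ (m : ℝ) := Nat.le_ceil t
  have h1 : ((7:ℝ)/8) ^ ((m : ℝ)) ≤ ((7:ℝ)/8) ^ t :=
    Real.rpow_le_rpow_of_exponent_ge (by norm_num) (by norm_num) hmt
  have h2 : ((7:ℝ)/8) ^ t = ε/2 := by
    rw [Real.rpow_def_of_pos (by norm_num)]
    rw [ht, mul_div_cancel₀ _ (ne_of_lt hlogr)]
    exact Real.exp_log hε2
  calc ((7:ℝ)/8) ^ (m : ℕ) = ((7:ℝ)/8) ^ ((m:ℕ) : ℝ) := (Real.rpow_natCast _ _).symm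
    _ ≤ ((7:ℝ)/8) ^ t := h1
    _ = ε/2 := h2


/-- for the constant c = 3⌈log_{7/8}(ε/2)⌉ and all large n, any 3CNF `T`
consisting of c/3 pairwise variable-disjoint clauses over X = {x_1,…,x_n} can be
refuted in polynomial size after discarding at most ε·2ⁿ assignments. -/
theorem disjoint_clauses_refutation_under_big_promise (ε : ℝ) (hε0 : 0 < ε) (hε1 : ε < 1) :
    ∃ p : Polynomial ℕ, ∃ n₀ : ℕ, ∀ n ≥ n₀, ∀ T : CNF,
      Is3CNF T → CNF.vars T ⊆ Finset.range n →
      T.card = ⌈Real.log (ε / 2) / Real.log (7 / 8)⌉₊ →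
      (∀ C₁ ∈ T, ∀ C₂ ∈ T, C₁ ≠ C₂ → Disjoint (Clause.vars C₁) (Clause.vars C₂)) →
      ∃ A : CNF, CNF.Proper A ∧
        ((discardedSet n A).ncard : ℝ) ≤ ε * 2 ^ n ∧
        ∃ L : List Clause, IsResRefutation (T ∪ A) L ∧ L.length ≤ p.eval n := by
  set m₀ : ℕ := ⌈Real.log (ε / 2) / Real.log (7 / 8)⌉₊ with hm₀
  refine ⟨Polynomial.C (10 * m₀ + 2), 0, ?_⟩
  intro n _ T h3 hvars hcard hdisj
  obtain ⟨hAproper, L, href, hlen⟩ := refutation_exists n T h3 hvars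
  refine ⟨(extList n T.toList).toFinset, hAproper, ?_, L, href, ?_⟩
  · -- the cardinality bound
    have hsub := discard_subset n T hvars
    set F := Finset.univ.filter (fun a : Fin n → Bool => CNF.Sat (extendAssign a) T) with hF
    have hsatF : satSet n T = ↑F := by
      ext a
      simp [satSet, hF]
    have hn1 : (discardedSet n ((extList n T.toList).toFinset)).ncard ≤ (satSet n T).ncard :=
      Set.ncard_le_ncard hsub (Set.toFinite _)
    have hn2 : (satSet n T).ncard = F.card := by rw [hsatF, Set.ncard_coe_finset]
    have hcount := sat_count n T h3 hvars hdisj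
    rw [hcard, ← hF] at hcount
    -- cast to ℝ
    have h8pos : (0:ℝ) < 8 ^ m₀ := by positivity
    have hcountR : (F.card : ℝ) ≤ ((7:ℝ)/8) ^ m₀ * 2 ^ n := by
      have : ((8:ℝ)) ^ m₀ * (F.card : ℝ) ≤ (7:ℝ) ^ m₀ * 2 ^ n := by
        have := hcount
        exact_mod_cast this
      rw [div_pow, div_mul_eq_mul_div, le_div_iff₀ h8pos]
      linarith [this]
    have hratio : ((7:ℝ)/8) ^ m₀ ≤ ε / 2 := ratio_bound ε hε0 hε1
    have h2n : (0:ℝ) ≤ 2 ^ n := by positivity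
    calc ((discardedSet n ((extList n T.toList).toFinset)).ncard : ℝ)
        ≤ (F.card : ℝ) := by exact_mod_cast (hn1.trans hn2.le)
      _ ≤ ((7:ℝ)/8) ^ m₀ * 2 ^ n := hcountR
      _ ≤ (ε / 2) * 2 ^ n := mul_le_mul_of_nonneg_right hratio h2n
      _ ≤ ε * 2 ^ n := mul_le_mul_of_nonneg_right (by linarith) h2n
  · rw [hlen, hcard, Polynomial.eval_C]
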